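/- Let k be a field of characteristic p > 2, G = ℤ/nℤ with p | n and generator g, and let H be the smash product algebra of k⟨a,b⟩/⟨ba - ab - (1/2)a²⟩ with kG, where g acts by a·g = a and b·g = a + b. Then in H, for all r, ℓ ≥ 1: b^r g^ℓ = ∑_{k'=0}^{r} binom(r,k') (1/2^{k'}) (2ℓ)^{(k')} g^ℓ a^{k'} b^{r-k'}, where (2ℓ)^{(k')} is the rising factorial 2ℓ(2ℓ+1)⋯(2ℓ+k'-1) in k. -/

import Mathlib

noncomputable section

/-- The rising factorial `x^(k) = x(x+1)⋯(x+k-1)` in a commutative ring. -/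
def risingFactorial {R : Type*} [CommRing R] (x : R) (k : ℕ) : R :=
  ∏ i ∈ Finset.range k, (x + i)

variable (k : Type*) [Field k]

def gF : FreeAlgebra k (Fin 3) := FreeAlgebra.ι k 0

def aF : FreeAlgebra k (Fin 3) := FreeAlgebra.ι k 1

def bF : FreeAlgebra k (Fin 3) := FreeAlgebra.ι k 2

/-- Relations of the smash product `(k⟨a,b⟩/⟨ba - ab - (1/2)a²⟩) # kG`:
`g^n = 1`, `ag = ga`, `bg = ga + gb`, `ba = ab + (1/2)a²`. -/
def relH (n : ℕ) : FreeAlgebra k (Fin 3) → FreeAlgebra k (Fin 3) → Prop :=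
  fun x y =>
    (x = (gF k) ^ n ∧ y = 1) ∨
    (x = aF k * gF k ∧ y = gF k * aF k) ∨
    (x = bF k * gF k ∧ y = gF k * aF k + gF k * bF k) ∨
    (x = bF k * aF k ∧ y = aF k * bF k + ((2 : k)⁻¹) • (aF k) ^ 2)

/-- The smash product algebra `H = (k⟨a,b⟩/⟨ba - ab - (1/2)a²⟩) # kG`. -/
abbrev H (n : ℕ) := RingQuot (relH k n)

def gH (n : ℕ) : H k n := RingQuot.mkAlgHom k (relH k n) (gF k)

def aH (n : ℕ) : H k n := RingQuot.mkAlgHom k (relH k n) (aF k)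

def bH (n : ℕ) : H k n := RingQuot.mkAlgHom k (relH k n) (bF k)

namespace SmashAux

variable {k} (n : ℕ)

lemma rel_ag : aH k n * gH k n = gH k n * aH k n := by
  simp only [aH, gH, ← map_mul]
  exact RingQuot.mkAlgHom_rel k (Or.inr (Or.inl ⟨rfl, rfl⟩))

lemma rel_bg : bH k n * gH k n = gH k n * aH k n + gH k n * bH k n := by
  simp only [aH, bH, gH, ← map_mul, ← map_add]
  exact RingQuot.mkAlgHom_rel k (Or.inr (Or.inr (Or.inl ⟨rfl, rfl⟩)))

lemma rel_ba : bH k n * aH k n = aH k n * bH k n + ((2 : k)⁻¹) • (aH k n) ^ 2 := by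
  simp only [aH, bH, ← map_mul, ← map_pow]
  rw [← map_smul, ← map_add]
  exact RingQuot.mkAlgHom_rel k (Or.inr (Or.inr (Or.inr ⟨rfl, rfl⟩)))

lemma a_mul_gpow (m : ℕ) : aH k n * (gH k n) ^ m = (gH k n) ^ m * aH k n := by
  induction m with
  | zero => simp
  | succ m ih =>
    rw [pow_succ', ← mul_assoc, rel_ag, mul_assoc, ih, ← mul_assoc]

lemma b_mul_gpow (ℓ : ℕ) :
    bH k n * (gH k n) ^ ℓ = (gH k n) ^ ℓ * ((ℓ : k) • aH k n + bH k n) := by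
  induction ℓ with
  | zero => simp
  | succ m ih =>
    rw [pow_succ', ← mul_assoc, rel_bg, add_mul, mul_assoc, mul_assoc, ih,
      a_mul_gpow, ← mul_assoc, ← mul_assoc, ← mul_add]
    congr 1
    push_cast
    rw [add_smul, one_smul]
    abel

lemma bpow_mul_gpow_aux (r ℓ : ℕ) :
    (bH k n) ^ r * (gH k n) ^ ℓ = (gH k n) ^ ℓ * ((ℓ : k) • aH k n + bH k n) ^ r := by
  induction r with
  | zero => simp
  | succ m ih =>
    rw [pow_succ', mul_assoc, ih, ← mul_assoc, b_mul_gpow, mul_assoc, ← pow_succ']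

/-- The key coefficient. -/
def coeff (ℓ r i : ℕ) : k :=
  (r.choose i : k) * ((2 : k)⁻¹) ^ i * risingFactorial ((2 * ℓ : ℕ) : k) i

lemma coeff_zero (ℓ r : ℕ) : (coeff ℓ r 0 : k) = 1 := by
  simp [coeff, risingFactorial]

lemma coeff_top (ℓ r : ℕ) : (coeff ℓ r (r + 1) : k) = 0 := by
  simp [coeff, Nat.choose_succ_self]

lemma coeff_succ (h2 : (2 : k) ≠ 0) (ℓ r i : ℕ) :
    (coeff ℓ (r + 1) (i + 1) : k)
      = coeff ℓ r i * ((ℓ : k) + (i : k) * (2 : k)⁻¹) + coeff ℓ r (i + 1) := by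
  have hrf : risingFactorial ((2 * ℓ : ℕ) : k) (i + 1)
      = risingFactorial ((2 * ℓ : ℕ) : k) i * (((2 * ℓ : ℕ) : k) + (i : k)) := by
    simp [risingFactorial, Finset.prod_range_succ]
  simp only [coeff, Nat.choose_succ_succ, hrf]
  push_cast
  field_simp
  linear_combination (2 * (r.choose i : k) * (2:k)⁻¹ ^ i * ℓ * risingFactorial (2 * (ℓ:k)) i
    + (r.choose i : k) * (2:k)⁻¹ ^ i * risingFactorial (2 * (ℓ:k)) i * i) * (mul_inv_cancel₀ h2)

/-- `c = ℓ•a + b` satisfies `c a = a c + ½ a²`. -/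
lemma c_mul_a (ℓ : ℕ) :
    ((ℓ : k) • aH k n + bH k n) * aH k n
      = aH k n * ((ℓ : k) • aH k n + bH k n) + ((2 : k)⁻¹) • (aH k n) ^ 2 := by
  rw [add_mul, mul_add, rel_ba, smul_mul_assoc, mul_smul_comm, ← sq]
  abel

lemma c_mul_apow (ℓ m : ℕ) :
    ((ℓ : k) • aH k n + bH k n) * (aH k n) ^ m
      = (aH k n) ^ m * ((ℓ : k) • aH k n + bH k n)
        + ((m : k) * (2 : k)⁻¹) • (aH k n) ^ (m + 1) := by
  induction m with
  | zero => simp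
  | succ m ih =>
    rw [pow_succ, ← mul_assoc, ih, add_mul, mul_assoc, c_mul_a, mul_add,
      smul_mul_assoc, ← pow_succ, ← mul_assoc, ← pow_succ]
    rw [mul_smul_comm, ← pow_add]
    push_cast
    rw [add_mul, one_mul, add_smul]
    have : m + 1 + 1 = m + 2 := by ring
    rw [this]
    abel

lemma c_mul_term (ℓ r i : ℕ) :
    ((ℓ : k) • aH k n + bH k n) * ((aH k n) ^ i * (bH k n) ^ (r - i))
      = ((ℓ : k) + (i : k) * (2 : k)⁻¹) • ((aH k n) ^ (i + 1) * (bH k n) ^ (r - i))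
        + (aH k n) ^ i * (bH k n) ^ (r - i + 1) := by
  rw [← mul_assoc, c_mul_apow, add_mul, smul_mul_assoc, mul_assoc, add_mul,
    smul_mul_assoc, ← pow_succ', mul_add, mul_smul_comm, ← mul_assoc, ← pow_succ,
    add_smul]
  abel

lemma cpow (h2 : (2 : k) ≠ 0) (ℓ r : ℕ) :
    ((ℓ : k) • aH k n + bH k n) ^ r
      = ∑ i ∈ Finset.range (r + 1),
          (coeff ℓ r i : k) • ((aH k n) ^ i * (bH k n) ^ (r - i)) := by
  induction r with
  | zero => simp [coeff_zero]
  | succ r ih =>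
    rw [pow_succ', ih, Finset.mul_sum]
    simp only [mul_smul_comm, c_mul_term, smul_add, smul_smul]
    rw [Finset.sum_add_distrib]
    -- second sum: shift so that everything is indexed by `i+1`, top term vanishes
    have hsum2 : (∑ i ∈ Finset.range (r + 1),
          (coeff ℓ r i : k) • ((aH k n) ^ i * (bH k n) ^ (r - i + 1)))
        = (∑ i ∈ Finset.range (r + 1),
            (coeff ℓ r (i + 1) : k) • ((aH k n) ^ (i + 1) * (bH k n) ^ (r - i)))
          + (coeff ℓ r 0 : k) • ((aH k n) ^ 0 * (bH k n) ^ (r + 1)) := by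
      rw [Finset.sum_range_succ' (fun i =>
        (coeff ℓ r i : k) • ((aH k n) ^ i * (bH k n) ^ (r - i + 1)))]
      rw [Finset.sum_range_succ (fun i =>
        (coeff ℓ r (i + 1) : k) • ((aH k n) ^ (i + 1) * (bH k n) ^ (r - i)))]
      rw [coeff_top, zero_smul, add_zero]
      congr 1
      · apply Finset.sum_congr rfl
        intro i hi
        rw [Finset.mem_range] at hi
        have h1 : r - (i + 1) + 1 = r - i := by omega
        rw [h1]
    rw [hsum2, ← add_assoc, ← Finset.sum_add_distrib]
    -- now compare with RHS via sum_range_succ'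
    rw [Finset.sum_range_succ' (fun i =>
      (coeff ℓ (r + 1) i : k) • ((aH k n) ^ i * (bH k n) ^ (r + 1 - i)))]
    congr 1
    · apply Finset.sum_congr rfl
      intro i hi
      rw [← add_smul]
      have h1 : r + 1 - (i + 1) = r - i := by omega
      rw [h1, coeff_succ h2]
    · rw [coeff_zero, coeff_zero]
      simp

end SmashAux

theorem bpow_mul_gpow (p n : ℕ) [Fact p.Prime] (hp : 2 < p) [CharP k p]
    (hn : 0 < n) (hpn : p ∣ n) (r ℓ : ℕ) (hr : 1 ≤ r) (hℓ : 1 ≤ ℓ) :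
    (bH k n) ^ r * (gH k n) ^ ℓ =
      ∑ k' ∈ Finset.range (r + 1),
        ((r.choose k' : k) * ((2 : k)⁻¹) ^ k' * risingFactorial ((2 * ℓ : ℕ) : k) k') •
          ((gH k n) ^ ℓ * (aH k n) ^ k' * (bH k n) ^ (r - k')) := by
  have h2 : (2 : k) ≠ 0 := by
    have := Fact.out (p := p.Prime)
    intro h
    have h3 : (p : ℕ) ∣ 2 := by
      exact_mod_cast (CharP.cast_eq_zero_iff k p 2).mp h
    have := Nat.le_of_dvd (by norm_num) h3
    omega
  rw [SmashAux.bpow_mul_gpow_aux, SmashAux.cpow n h2, Finset.mul_sum]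
  apply Finset.sum_congr rfl
  intro i _
  rw [mul_smul_comm, ← mul_assoc]
  rfl
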